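/- arXiv:1312.1085 — 3 statements merged into one kernel-verified Lean document; each statement's English description precedes it below -/
import Mathlib

section
/- Let P be an n×n real orthogonal projection matrix and Q a symmetric positive semidefinite matrix with P + Q ≼ I. Suppose w ∈ ℂⁿ is a nonzero vector and θ ∈ (0, 2π) satisfy (I - P - Q)(I - 2P) w = e^{iθ} w. Then a contradiction follows; i.e., e^{iθ} with θ ∈ (0,2π) is never an eigenvalue of R = (I - P - Q)(I - 2P). In particular the only eigenvalue of R of modulus 1 that can occur is 1 itself. -/
open Matrix ComplexOrder
open scoped MatrixOrder

lemma psd_map_cx {n : ℕ} {M : Matrix (Fin n) (Fin n) ℝ} (h : M.PosSemidef) :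
    (M.map (algebraMap ℝ ℂ)).PosSemidef := by
  obtain ⟨B, rfl⟩ : ∃ B : Matrix (Fin n) (Fin n) ℝ, M = Bᴴ * B :=
    CStarAlgebra.nonneg_iff_eq_star_mul_self.mp h.nonneg
  rw [Matrix.map_mul (f := algebraMap ℝ ℂ),
    Matrix.conjTranspose_map (algebraMap ℝ ℂ) (fun r => (Complex.conj_ofReal r).symm)]
  exact posSemidef_conjTranspose_mul_self _

/-- If `P` is a real orthogonal projection matrix, `Q` symmetric PSD with `P + Q ≼ I`,
then `R = (I - P - Q)(I - 2P)` has no complex eigenvalue `e^{iθ}` with `θ ∈ (0, 2π)`: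
the only possible eigenvalue of modulus one is `1` itself. -/
theorem admm_R_no_unit_eigenvalue {n : ℕ} (P Q : Matrix (Fin n) (Fin n) ℝ)
    (hPproj : P * P = P) (hPsym : Pᵀ = P)
    (hQ : Q.PosSemidef)
    (hPQI : (1 - P - Q).PosSemidef)
    (θ : ℝ) (hθ0 : 0 < θ) (hθ2 : θ < 2 * Real.pi)
    (w : Fin n → ℂ) (hw : w ≠ 0)
    (heig : (((1 - P - Q) * (1 - (2:ℝ) • P)).map (algebraMap ℝ ℂ)).mulVec w
      = Complex.exp (θ * Complex.I) • w) : False := by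
  set f := algebraMap ℝ ℂ
  set lam := Complex.exp (θ * Complex.I) with hlam
  set A := ((1 : Matrix (Fin n) (Fin n) ℝ) - P - Q).map f with hAdef
  set Bc := ((1 : Matrix (Fin n) (Fin n) ℝ) - (2:ℝ) • P).map f with hBdef
  set Pc := P.map f with hPcdef
  set Qc := Q.map f with hQcdef
  obtain ⟨v, hvdef⟩ : ∃ v, v = Bc *ᵥ w := ⟨_, rfl⟩
  -- real-side facts
  have hPH : Pᴴ = P := by
    ext i j
    simpa using congrFun (congrFun hPsym i) j
  have hPpsd : P.PosSemidef :=
    by have := posSemidef_conjTranspose_mul_self P; rwa [hPH, hPproj] at this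
  have hB2 : ((1 : Matrix (Fin n) (Fin n) ℝ) - (2:ℝ) • P) *
      ((1 : Matrix (Fin n) (Fin n) ℝ) - (2:ℝ) • P) = 1 := by
    simp only [sub_mul, mul_sub, one_mul, mul_one, smul_mul_assoc, mul_smul_comm, smul_smul,
      hPproj]
    module
  -- complex-side facts
  have hA : A.PosSemidef := psd_map_cx hPQI
  have hPc : Pc.PosSemidef := psd_map_cx hPpsd
  have hQc : Qc.PosSemidef := psd_map_cx hQ
  have hBH : Bcᴴ = Bc := by
    rw [hBdef, ← Matrix.conjTranspose_map f (fun r => (Complex.conj_ofReal r).symm)]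
    congr 1
    rw [conjTranspose_sub, conjTranspose_one, conjTranspose_smul, hPH]
    simp
  have hBB : Bc * Bc = 1 := by
    rw [hBdef, ← Matrix.map_mul, hB2, Matrix.map_one _ (map_zero f) (map_one f)]
  have hone : (1 : Matrix (Fin n) (Fin n) ℂ) - A = Pc + Qc := by
    ext i j
    by_cases h : i = j <;>
      simp [hAdef, hPcdef, hQcdef, Matrix.map_apply, Matrix.one_apply, Matrix.sub_apply,
        Matrix.add_apply, h, f] <;> push_cast <;> ring
  have hA1 : ((1 : Matrix (Fin n) (Fin n) ℂ) - A).PosSemidef := by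
    rw [hone, show Pc + Qc = (P + Q).map f by ext i j; simp [hPcdef, hQcdef, Matrix.map_apply]]
    exact psd_map_cx (hPpsd.add hQ)
  have key : ∀ S : Matrix (Fin n) (Fin n) ℂ, S * S = A →
      S * ((1 : Matrix (Fin n) (Fin n) ℂ) - A) * S = A - A * A := by
    intro S hsq
    rw [← hsq]
    noncomm_ring
  have hA2 : (A - A * A).PosSemidef := by
    have h := hA1.conjTranspose_mul_mul_same (CFC.sqrt A)
    rw [(CFC.sqrt_nonneg A).posSemidef.1] at h
    rwa [key _ (CFC.sqrt_mul_sqrt_self A hA.nonneg)] at h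
  -- the eigen equation
  have hv : A *ᵥ v = lam • w := by
    rw [hvdef, mulVec_mulVec, ← Matrix.map_mul]
    exact heig
  have hconj : (starRingEnd ℂ) lam * lam = 1 := by
    rw [hlam, ← Complex.exp_conj, ← Complex.exp_add]
    simp [Complex.conj_ofReal]
  -- (a) ⟨v,v⟩ = ⟨w,w⟩
  have hvv : star v ⬝ᵥ v = star w ⬝ᵥ w := by
    rw [hvdef, star_mulVec, hBH, ← dotProduct_mulVec, mulVec_mulVec, hBB, one_mulVec]
  -- (b) ⟨v, A²v⟩ = ⟨w,w⟩
  have hAA : star v ⬝ᵥ (A * A) *ᵥ v = star w ⬝ᵥ w := by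
    have h1 : star v ⬝ᵥ (A * A) *ᵥ v = star (lam • w) ⬝ᵥ (lam • w) := by
      rw [← mulVec_mulVec, hv, dotProduct_mulVec,
        show star v ᵥ* A = star (A *ᵥ v) by rw [star_mulVec, hA.1], hv]
    rw [h1, star_smul, smul_dotProduct, dotProduct_smul, smul_smul, smul_eq_mul]
    simp [hconj]
  -- (c)+(d): ⟨v,(1-A)v⟩ = 0
  have h3 := hA2.re_dotProduct_nonneg v
  rw [sub_mulVec, dotProduct_sub, hAA, map_sub] at h3
  simp only [RCLike.re_to_complex] at h3
  have h4 := hA1.dotProduct_mulVec_nonneg v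
  have h5 : star v ⬝ᵥ ((1 : Matrix (Fin n) (Fin n) ℂ) - A) *ᵥ v = 0 := by
    have h6 : (star v ⬝ᵥ ((1 : Matrix (Fin n) (Fin n) ℂ) - A) *ᵥ v).re ≤ 0 := by
      rw [sub_mulVec, one_mulVec, dotProduct_sub, hvv, Complex.sub_re]
      linarith
    rw [Complex.le_def] at h4
    apply Complex.ext <;> simp at h4 ⊢ <;> linarith [h4.1, h4.2]
  have h7 : ((1 : Matrix (Fin n) (Fin n) ℂ) - A) *ᵥ v = 0 :=
    (hA1.dotProduct_mulVec_zero_iff v).mp h5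
  -- (g) Pc v = 0
  have h8 : Pc *ᵥ v + Qc *ᵥ v = 0 := by
    rw [← add_mulVec, ← hone]
    exact h7
  have h9 : star v ⬝ᵥ Pc *ᵥ v + star v ⬝ᵥ Qc *ᵥ v = 0 := by
    rw [← dotProduct_add, h8, dotProduct_zero]
  have h10 : star v ⬝ᵥ Pc *ᵥ v = 0 := by
    refine le_antisymm ?_ (hPc.dotProduct_mulVec_nonneg v)
    rw [eq_neg_of_add_eq_zero_left h9]
    exact neg_nonpos_of_nonneg (hQc.dotProduct_mulVec_nonneg v)
  have h11 : Pc *ᵥ v = 0 := (hPc.dotProduct_mulVec_zero_iff v).mp h10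
  -- (h) Bc v = v, hence v = w and lam = 1
  have hBc : Bc = 1 - (2:ℂ) • Pc := by
    ext i j
    by_cases h : i = j <;>
      simp [hBdef, hPcdef, Matrix.map_apply, Matrix.one_apply, Matrix.sub_apply,
        Matrix.smul_apply, h, f] <;> push_cast <;> ring
  have h12 : Bc *ᵥ v = v := by
    rw [hBc, sub_mulVec, one_mulVec, smul_mulVec, h11, smul_zero, sub_zero]
  have h13 : Bc *ᵥ v = w := by
    rw [hvdef, mulVec_mulVec, hBB, one_mulVec]
  have hveqw : v = w := by rw [← h12, h13]
  have hAvv : A *ᵥ v = v := by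
    have e : (1 - A) *ᵥ v = v - A *ᵥ v := by rw [sub_mulVec, one_mulVec]
    have h7' : v - A *ᵥ v = 0 := by rw [← e]; exact h7
    exact (sub_eq_zero.mp h7').symm
  have hlw : lam • w = w := by rw [← hv, hAvv, hveqw]
  have hlam1 : lam = 1 := by
    have : (lam - 1) • w = 0 := by rw [sub_smul, one_smul, hlw, sub_self]
    rcases smul_eq_zero.mp this with h | h
    · exact sub_eq_zero.mp h
    · exact absurd h hw
  -- contradiction from θ ∈ (0, 2π)
  obtain ⟨k, hk⟩ := Complex.exp_eq_one_iff.mp (hlam ▸ hlam1)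
  have hkr : (θ : ℂ) = (k : ℂ) * (2 * Real.pi) := by
    have hI := Complex.I_ne_zero
    have : (θ : ℂ) * Complex.I = ((k : ℂ) * (2 * Real.pi)) * Complex.I := by
      rw [hk]; push_cast; ring
    exact mul_right_cancel₀ hI this
  have hθk : θ = (k : ℝ) * (2 * Real.pi) := by
    exact_mod_cast hkr
  have hpi := Real.pi_pos
  have hk0 : 0 < (k : ℝ) := by nlinarith
  have hk1 : (1 : ℝ) ≤ (k : ℝ) := by exact_mod_cast (by exact_mod_cast hk0 : 0 < k)
  nlinarith
end

section
/- Let P be an n×n real orthogonal projection matrix and Q a symmetric positive semidefinite matrix with P + Q ≼ I, and set R = (I - P - Q)(I - 2P). Then for every eigenvalue λ of R, rank((R - λI)²) = rank(R - λI); equivalently every Jordan block of R is of size 1 (R is diagonalizable over ℂ). -/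
open Matrix ComplexOrder

/-- For a normal complex matrix `A`, `rank (A^2) = rank A`. -/
lemma rank_sq_of_normal {m : Type*} [Fintype m] [DecidableEq m] (A : Matrix m m ℂ)
    (h : Aᴴ * A = A * Aᴴ) : (A ^ 2).rank = A.rank := by
  have h1 : (A ^ 2)ᴴ * (A ^ 2) = (Aᴴ * A)ᴴ * (Aᴴ * A) := by
    rw [pow_two, conjTranspose_mul, conjTranspose_mul, conjTranspose_conjTranspose]
    have h2 : Aᴴ * (Aᴴ * A) * A = Aᴴ * (A * Aᴴ) * A := by rw [h]
    simpa only [mul_assoc] using h2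
  calc (A ^ 2).rank = ((A ^ 2)ᴴ * (A ^ 2)).rank := (rank_conjTranspose_mul_self _).symm
    _ = ((Aᴴ * A)ᴴ * (Aᴴ * A)).rank := by rw [h1]
    _ = (Aᴴ * A).rank := rank_conjTranspose_mul_self _
    _ = A.rank := rank_conjTranspose_mul_self _

/-- If `P` is a real orthogonal projection matrix, `Q` symmetric PSD with `P + Q ≼ I`,
then for every (complex) eigenvalue `μ` of `R = (I - P - Q)(I - 2P)` one has
`rank((R - μI)²) = rank(R - μI)`: every Jordan block of `R` is trivial, i.e. `R` is
diagonalizable over `ℂ`. -/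
theorem admm_R_trivial_jordan_blocks {n : ℕ} (P Q : Matrix (Fin n) (Fin n) ℝ)
    (hPproj : P * P = P) (hPsym : Pᵀ = P)
    (hQ : Q.PosSemidef)
    (hPQI : (1 - P - Q).PosSemidef)
    (μ : ℂ)
    (heig : ((((1 - P - Q) * (1 - (2:ℝ) • P)).map (algebraMap ℝ ℂ)) - μ • 1).det = 0) :
    (((((1 - P - Q) * (1 - (2:ℝ) • P)).map (algebraMap ℝ ℂ)) - μ • 1) ^ 2).rank
      = ((((1 - P - Q) * (1 - (2:ℝ) • P)).map (algebraMap ℝ ℂ)) - μ • 1).rank := by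
  -- Step 1: Q * P = 0
  have hQP : Q * P = 0 := by
    have key : ∀ x : Fin n → ℝ, Q *ᵥ (P *ᵥ x) = 0 := by
      intro x
      set y := P *ᵥ x with hy
      have hPy : P *ᵥ y = y := by
        rw [hy, mulVec_mulVec, hPproj]
      have h1 : star y ⬝ᵥ Q *ᵥ y = 0 := by
        have hq : (0:ℝ) ≤ star y ⬝ᵥ Q *ᵥ y := hQ.dotProduct_mulVec_nonneg y
        have hpq : (0:ℝ) ≤ star y ⬝ᵥ (1 - P - Q) *ᵥ y := hPQI.dotProduct_mulVec_nonneg y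
        have hexp : star y ⬝ᵥ (1 - P - Q) *ᵥ y = - (star y ⬝ᵥ Q *ᵥ y) := by
          rw [sub_mulVec, sub_mulVec, one_mulVec, hPy]
          simp [dotProduct_sub]
        rw [hexp] at hpq
        linarith
      exact hQ.dotProduct_mulVec_zero_iff y |>.mp h1
    ext i j
    have := congrFun (key (Pi.single j 1)) i
    rw [mulVec_mulVec] at this
    simpa [mulVec_single] using this
  -- Step 2: R = 1 - P - Q
  have hR : (1 - P - Q) * (1 - (2:ℝ) • P) = 1 - P - Q := by
    have h0 : (1 - P - Q) * P = 0 := by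
      rw [sub_mul, sub_mul, one_mul, hPproj, hQP]
      simp
    rw [mul_sub, mul_one, mul_smul_comm, h0, smul_zero, sub_zero]
  rw [hR]
  -- Step 3: the complex matrix is Hermitian, so shifted matrix is normal
  set C : Matrix (Fin n) (Fin n) ℂ := (1 - P - Q).map (algebraMap ℝ ℂ) with hC
  have hCH : Cᴴ = C := by
    have hsymm : (1 - P - Q)ᵀ = 1 - P - Q := by
      rw [transpose_sub, transpose_sub, transpose_one, hPsym]
      have : Qᵀ = Q := hQ.1
      rw [this]
    rw [hC, ← Matrix.conjTranspose_map (algebraMap ℝ ℂ) (by intro r; simp), ]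
    have : (1 - P - Q)ᴴ = 1 - P - Q := hsymm
    rw [this]
  set A : Matrix (Fin n) (Fin n) ℂ := C - μ • 1 with hA
  have hnormal : Aᴴ * A = A * Aᴴ := by
    have hAH : Aᴴ = C - (star μ) • 1 := by
      rw [hA, conjTranspose_sub, hCH, conjTranspose_smul, conjTranspose_one]
    rw [hAH, hA]
    simp only [mul_sub, sub_mul, smul_mul_assoc, mul_smul_comm, mul_one, one_mul, smul_smul,
      smul_sub]
    rw [mul_comm (star μ) μ]
    module
  exact rank_sq_of_normal A hnormal
end

section
/- Let σ² > 0, ρ > 0, a = ρ/(σ² + 2ρ), and for k ∈ {0,…,N-1} let s_k = (σ² + 2ρ(1 + cos(2πk/N)))/(σ² + 2ρ) and D_k = a(1 + cos(2πk/N)). Then the two roots λ of λ² - s_k λ + D_k = 0 satisfy: if s_k² ≥ 4D_k both roots are real and lie in [0, 1], and if s_k² < 4D_k the roots are complex conjugates with common modulus √D_k < 1. In all cases every root has modulus at most max( (s_k + √(max(s_k²-4D_k,0)))/2 , √D_k ) < 1 provided cos(2πk/N) < 1. -/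
set_option maxHeartbeats 800000

/-- Roots of the quadratic `λ² - s_k λ + D_k = 0` arising from the ring-network
block-circulant symbol, with `s_k = (σ² + 2ρ(1+cos(2πk/N)))/(σ² + 2ρ)` and
`D_k = (ρ/(σ²+2ρ))(1+cos(2πk/N))`: if `s_k² ≥ 4D_k` both roots are real and lie in
`[0,1]`; if `s_k² < 4D_k` they are complex conjugates of modulus `√D_k`; and whenever
`cos(2πk/N) < 1` every root has modulus strictly less than `1`. -/
theorem ring_symbol_roots (N k : ℕ) (hk : k < N) (σ2 ρ : ℝ) (hσ : 0 < σ2) (hρ : 0 < ρ)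
    (hcos : Real.cos (2 * Real.pi * k / N) < 1)
    (s D : ℝ)
    (hs : s = (σ2 + 2 * ρ * (1 + Real.cos (2 * Real.pi * k / N))) / (σ2 + 2 * ρ))
    (hD : D = (ρ / (σ2 + 2 * ρ)) * (1 + Real.cos (2 * Real.pi * k / N)))
    (lam : ℂ) (hlam : lam ^ 2 - (s : ℂ) * lam + (D : ℂ) = 0) :
    (s ^ 2 ≥ 4 * D → lam.im = 0 ∧ 0 ≤ lam.re ∧ lam.re ≤ 1) ∧
    (s ^ 2 < 4 * D → ‖lam‖ = Real.sqrt D) ∧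
    ‖lam‖ < 1 := by
  set c := Real.cos (2 * Real.pi * k / N) with hc
  have hc1 : -1 ≤ c := Real.neg_one_le_cos _
  have ht : 0 < σ2 + 2 * ρ := by linarith
  have hD0 : 0 ≤ D := by
    rw [hD]; apply mul_nonneg (le_of_lt (div_pos hρ ht)); linarith
  have hD1 : D < 1 := by
    rw [hD, div_mul_eq_mul_div, div_lt_one ht]; nlinarith
  have hs0 : 0 < s := by
    rw [hs]; apply div_pos ?_ ht; nlinarith
  have hs2 : s < 2 := by
    rw [hs, div_lt_iff₀ ht]; nlinarith
  have hf1 : 0 < 1 - s + D := by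
    have h : 1 - s + D = (ρ * (1 - c)) / (σ2 + 2 * ρ) := by
      rw [hs, hD]; field_simp; ring
    rw [h]; apply div_pos ?_ ht; nlinarith
  set x := lam.re with hx
  set y := lam.im with hy
  have h1 : x ^ 2 - y ^ 2 - s * x + D = 0 := by
    have := congrArg Complex.re hlam
    simp [Complex.add_re, Complex.sub_re, Complex.mul_re, pow_two] at this
    nlinarith [this]
  have h2 : y * (2 * x - s) = 0 := by
    have := congrArg Complex.im hlam
    simp [Complex.add_im, Complex.sub_im, Complex.mul_im, pow_two] at this
    nlinarith [this]
  have hnormSq : Complex.normSq lam = x ^ 2 + y ^ 2 := by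
    rw [Complex.normSq_apply]; ring
  have hreal : s ^ 2 ≥ 4 * D → y = 0 ∧ 0 ≤ x ∧ x < 1 := by
    intro hge
    have hy0 : y = 0 := by
      rcases mul_eq_zero.1 h2 with h | h
      · exact h
      · have hx2 : x = s / 2 := by linarith
        nlinarith [sq_nonneg y]
    refine ⟨hy0, ?_, ?_⟩
    · rw [hy0] at h1; nlinarith [sq_nonneg x]
    · rw [hy0] at h1
      by_contra hx1
      push_neg at hx1
      nlinarith [mul_nonneg (by linarith : (0:ℝ) ≤ x - 1) (by linarith : (0:ℝ) ≤ x + 1 - s)]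
  have hcompl : s ^ 2 < 4 * D → x ^ 2 + y ^ 2 = D := by
    intro hlt
    have hy0 : y ≠ 0 := by
      intro hy0
      rw [hy0] at h1
      nlinarith [sq_nonneg (2 * x - s)]
    have hx2 : 2 * x - s = 0 := by
      rcases mul_eq_zero.1 h2 with h | h
      · exact absurd h hy0
      · exact h
    nlinarith
  have habs : ‖lam‖ = Real.sqrt (x ^ 2 + y ^ 2) := by
    rw [Complex.norm_def, hnormSq]
  refine ⟨fun hge => hreal hge |>.elim fun a b => ⟨a, b.1, b.2.le⟩, ?_, ?_⟩
  · intro hlt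
    rw [habs, hcompl hlt]
  · rcases le_or_gt (4 * D) (s ^ 2) with hge | hlt
    · obtain ⟨hy0, hx0, hx1⟩ := hreal hge
      rw [habs, hy0]
      have : Real.sqrt (x ^ 2 + 0 ^ 2) < Real.sqrt 1 := by
        apply Real.sqrt_lt_sqrt (by positivity); nlinarith
      simpa using this
    · rw [habs, hcompl hlt]
      have : Real.sqrt D < Real.sqrt 1 := Real.sqrt_lt_sqrt hD0 hD1
      simpa using this
end
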